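/- A minimally irreducible real (or sign pattern) matrix of order n has at most 2n − 2 nonzero entries. -/

import Mathlib

/-- `reachIn R k a b`: there is a walk of length exactly `k` from `a` to `b`. -/
def reachIn {V : Type*} (R : V → V → Prop) : ℕ → V → V → Prop
  | 0 => Eq
  | k+1 => fun a b => ∃ c, reachIn R k a c ∧ R c b

lemma reflTransGen_iff_reachIn {V : Type*} (R : V → V → Prop) (a b : V) :
    Relation.ReflTransGen R a b ↔ ∃ k, reachIn R k a b := by
  constructor
  · intro h
    induction h with
    | refl => exact ⟨0, rfl⟩
    | tail h₁ h₂ ih => obtain ⟨k, hk⟩ := ih; exact ⟨k + 1, _, hk, h₂⟩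
  · rintro ⟨k, hk⟩
    induction k generalizing b with
    | zero => cases hk; rfl
    | succ k ih => obtain ⟨c, hc, hR⟩ := hk; exact (ih c hc).tail hR

/-- Crossing lemma: a path from inside `S` to outside `S` must cross the boundary. -/
lemma exists_cross {V : Type*} {R : V → V → Prop} {S : Set V} {p q : V}
    (h : Relation.ReflTransGen R p q) (hp : p ∈ S) (hq : q ∉ S) :
    ∃ a ∈ S, ∃ b ∉ S, R a b := by
  induction h with
  | refl => exact absurd hp hq
  | @tail b c h₁ h₂ ih =>
    by_cases hb : b ∈ S
    · exact ⟨b, hb, c, hq, h₂⟩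
    · exact ih hb

/-- Spanning out-arborescence: if every vertex is reachable from `r`, there is a
subrelation `F ⊆ R` with at most `card V - 1` arcs from which every vertex is
still reachable from `r`. -/
lemma exists_tree {V : Type*} [Fintype V] (R : V → V → Prop) (r : V)
    (hconn : ∀ v, Relation.ReflTransGen R r v) :
    ∃ F : V → V → Prop, (∀ a b, F a b → R a b) ∧ (∀ v, Relation.ReflTransGen F r v) ∧
      {pq : V × V | F pq.1 pq.2}.ncard ≤ Fintype.card V - 1 := by
  classical
  have hex : ∀ v, ∃ k, reachIn R k r v := fun v => (reflTransGen_iff_reachIn R r v).1 (hconn v)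
  set d : V → ℕ := fun v => Nat.find (hex v) with hd_def
  have hd : ∀ v, reachIn R (d v) r v := fun v => Nat.find_spec (hex v)
  have hdmin : ∀ v k, reachIn R k r v → d v ≤ k := fun v k h => Nat.find_min' (hex v) h
  have hpar : ∀ v, v ≠ r → ∃ u, R u v ∧ d u < d v := by
    intro v hv
    have h0 : d v ≠ 0 := by
      intro h0
      have := hd v
      rw [h0] at this
      exact hv this.symm
    obtain ⟨k, hk⟩ : ∃ k, d v = k + 1 := ⟨d v - 1, by omega⟩
    have h := hd v
    rw [hk] at h
    obtain ⟨c, hc, hR⟩ := h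
    exact ⟨c, hR, by have := hdmin c k hc; omega⟩
  let g : V → V := fun v => if h : v = r then r else Classical.choose (hpar v h)
  have hg : ∀ v (h : v ≠ r), R (g v) v ∧ d (g v) < d v := by
    intro v h
    simp only [g, dif_neg h]
    exact Classical.choose_spec (hpar v h)
  refine ⟨fun a b => b ≠ r ∧ a = g b, ?_, ?_, ?_⟩
  · rintro a b ⟨hb, rfl⟩
    exact (hg b hb).1
  · have key : ∀ k v, d v ≤ k → Relation.ReflTransGen (fun a b => b ≠ r ∧ a = g b) r v := by
      intro k
      induction k with
      | zero =>
        intro v hv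
        by_cases h : v = r
        · subst h; exact Relation.ReflTransGen.refl
        · exact absurd ((hg v h).2.trans_le hv) (by omega)
      | succ k ih =>
        intro v hv
        by_cases h : v = r
        · subst h; exact Relation.ReflTransGen.refl
        · exact (ih (g v) (by have := (hg v h).2; omega)).tail ⟨h, rfl⟩
    exact fun v => key (d v) v le_rfl
  · have hsub : {pq : V × V | pq.2 ≠ r ∧ pq.1 = g pq.2} ⊆ (fun v => (g v, v)) '' {v | v ≠ r} := by
      rintro ⟨a, b⟩ ⟨hb, heq⟩
      exact ⟨b, hb, by simp [heq.symm]⟩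
    calc {pq : V × V | pq.2 ≠ r ∧ pq.1 = g pq.2}.ncard
        ≤ ((fun v => (g v, v)) '' {v | v ≠ r}).ncard :=
          Set.ncard_le_ncard hsub (Set.toFinite _)
      _ ≤ ({v : V | v ≠ r}).ncard := Set.ncard_image_le (Set.toFinite _)
      _ = (Set.univ \ {r} : Set V).ncard := by congr 1; ext v; simp
      _ = Fintype.card V - 1 := by
          rw [Set.ncard_diff (by simp) (Set.toFinite _), Set.ncard_univ, Set.ncard_singleton,
            Nat.card_eq_fintype_card]



/-- A matrix is irreducible if there is no nonempty proper index set `S` with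
`A i j = 0` for all `i ∈ S`, `j ∉ S`. -/
def MatIrred {n : ℕ} (A : Matrix (Fin n) (Fin n) ℝ) : Prop :=
  ∀ S : Set (Fin n), S.Nonempty → S ≠ Set.univ → ∃ i ∈ S, ∃ j ∉ S, A i j ≠ 0

/-- A minimally irreducible matrix of order `n` (irreducible, but replacing any
nonzero entry by `0` destroys irreducibility) has at most `2n - 2` nonzero entries. -/
theorem stmt5 {n : ℕ} (A : Matrix (Fin n) (Fin n) ℝ)
    (h1 : MatIrred A)
    (h2 : ∀ i j, A i j ≠ 0 →
      ¬ MatIrred (Matrix.of fun p q => if p = i ∧ q = j then 0 else A p q)) :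
    {pq : Fin n × Fin n | A pq.1 pq.2 ≠ 0}.ncard ≤ 2 * n - 2 := by
  classical
  cases n with
  | zero =>
    have : {pq : Fin 0 × Fin 0 | A pq.1 pq.2 ≠ 0} = ∅ := Set.eq_empty_of_isEmpty _
    simp [this]
  | succ m =>
    set R : Fin (m+1) → Fin (m+1) → Prop := fun i j => A i j ≠ 0 with hR
    -- strong connectivity
    have hconn : ∀ i j, Relation.ReflTransGen R i j := by
      intro i j
      by_cases hS : {k | Relation.ReflTransGen R i k} = Set.univ
      · have : j ∈ {k | Relation.ReflTransGen R i k} := hS ▸ Set.mem_univ j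
        exact this
      · obtain ⟨a, ha, b, hb, hab⟩ :=
          h1 {k | Relation.ReflTransGen R i k} ⟨i, Relation.ReflTransGen.refl⟩ hS
        exact absurd (Relation.ReflTransGen.tail ha hab) hb
    -- minimality in path language
    have hmin : ∀ i j, A i j ≠ 0 →
        ¬ Relation.ReflTransGen (fun p q => R p q ∧ ¬(p = i ∧ q = j)) i j := by
      intro i j hij hpath
      apply h2 i j hij
      intro S hS hSne
      set R' : Fin (m+1) → Fin (m+1) → Prop := fun p q => R p q ∧ ¬(p = i ∧ q = j) with hR'
      have lift : ∀ a b, Relation.ReflTransGen R a b → Relation.ReflTransGen R' a b := by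
        intro a b h
        induction h with
        | refl => exact Relation.ReflTransGen.refl
        | @tail b' c h₁ h₂ ih =>
          by_cases hcase : b' = i ∧ c = j
          · obtain ⟨rfl, rfl⟩ := hcase
            exact ih.trans hpath
          · exact ih.tail ⟨h₂, hcase⟩
      obtain ⟨p, hp⟩ := hS
      obtain ⟨q, hq⟩ := Set.ne_univ_iff_exists_notMem S |>.1 hSne
      obtain ⟨a, ha, b, hb, hab⟩ := exists_cross (lift p q (hconn p q)) hp hq
      refine ⟨a, ha, b, hb, ?_⟩
      simpa [Matrix.of_apply, if_neg hab.2] using hab.1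
    -- out-tree and in-tree from root 0
    obtain ⟨Fo, hFoR, hFoConn, hFoCard⟩ := exists_tree R (0 : Fin (m+1)) (fun v => hconn 0 v)
    obtain ⟨G, hGR, hGConn, hGCard⟩ :=
      exists_tree (Function.swap R) (0 : Fin (m+1)) (fun v => by
        have := hconn v 0
        exact Relation.reflTransGen_swap.2 this)
    set Fi : Fin (m+1) → Fin (m+1) → Prop := fun a b => G b a with hFi
    have hFiR : ∀ a b, Fi a b → R a b := fun a b h => hGR b a h
    have hFiConn : ∀ v, Relation.ReflTransGen Fi v 0 := by
      intro v
      exact Relation.reflTransGen_swap.1 (hGConn v)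
    -- every nonzero entry is an arc of Fo or Fi
    have hcover : {pq : Fin (m+1) × Fin (m+1) | A pq.1 pq.2 ≠ 0} ⊆
        {pq : Fin (m+1) × Fin (m+1) | Fo pq.1 pq.2} ∪ {pq | Fi pq.1 pq.2} := by
      rintro ⟨i, j⟩ hij
      by_contra hnot
      simp only [Set.mem_union, Set.mem_setOf_eq, not_or] at hnot
      obtain ⟨hno, hni⟩ := hnot
      apply hmin i j hij
      have hFpath : Relation.ReflTransGen (fun a b => Fo a b ∨ Fi a b) i j :=
        (Relation.ReflTransGen.mono (fun a b h => Or.inr h) _ _ (hFiConn i)).trans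
          (Relation.ReflTransGen.mono (fun a b h => Or.inl h) _ _ (hFoConn j))
      refine Relation.ReflTransGen.mono ?_ _ _ hFpath
      rintro a b (h | h)
      · refine ⟨hFoR a b h, ?_⟩
        rintro ⟨rfl, rfl⟩
        exact hno h
      · refine ⟨hFiR a b h, ?_⟩
        rintro ⟨rfl, rfl⟩
        exact hni h
    have hswap : {pq : Fin (m+1) × Fin (m+1) | Fi pq.1 pq.2}.ncard
        = {pq : Fin (m+1) × Fin (m+1) | G pq.1 pq.2}.ncard := by
      have himg : {pq : Fin (m+1) × Fin (m+1) | Fi pq.1 pq.2}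
          = Prod.swap '' {pq : Fin (m+1) × Fin (m+1) | G pq.1 pq.2} := by
        ext ⟨a, b⟩
        simp [Fi, Prod.swap, eq_comm, Prod.ext_iff]
      rw [himg, Set.ncard_image_of_injective _ Prod.swap_injective]
    calc {pq : Fin (m+1) × Fin (m+1) | A pq.1 pq.2 ≠ 0}.ncard
        ≤ ({pq : Fin (m+1) × Fin (m+1) | Fo pq.1 pq.2} ∪ {pq | Fi pq.1 pq.2}).ncard :=
          Set.ncard_le_ncard hcover (Set.toFinite _)
      _ ≤ {pq : Fin (m+1) × Fin (m+1) | Fo pq.1 pq.2}.ncard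
            + {pq : Fin (m+1) × Fin (m+1) | Fi pq.1 pq.2}.ncard := Set.ncard_union_le _ _
      _ ≤ (Fintype.card (Fin (m+1)) - 1) + (Fintype.card (Fin (m+1)) - 1) := by
          rw [hswap]; exact Nat.add_le_add hFoCard hGCard
      _ ≤ 2 * (m+1) - 2 := by simp [Fintype.card_fin]; omega
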